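/- Suppose a MinGC instance (X, w, g) satisfies: (i) whenever g(C) < g(X) some v ∈ X\C has positive marginal gain, and (ii) there is a constant p ≥ 0 such that for any C ⊂ X, the elements of C*\C (C* an optimal solution) can be ordered v_1,...,v_t (t minimal with g({v_1,...,v_t} ∪ C) = g(X)) so that g(C ∪ {v_1,...,v_i}) - g(C ∪ {v_1,...,v_{i-1}}) ≤ g(C∪{v_i}) - g(C) + p for all i ≤ t. Assume min weight is 1, w_max = max weight, δ the sparsity parameter, opt = w(C*). Then the greedy algorithm outputs a feasible solution C with w(C) ≤ ((p+1)·w_max/δ + ln((g(X) - p·opt)/opt)) · opt, where the logarithm term is taken to be 0 if g(X) ≤ (p+1)·opt. -/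

import Mathlib

/-- `(a-b)/a ≤ log a - log b` for `0 < b ≤ a`. -/
lemma stmt8_log_ineq {a b : ℝ} (hb : 0 < b) (hab : b ≤ a) :
    (a - b) / a ≤ Real.log a - Real.log b := by
  have ha : 0 < a := lt_of_lt_of_le hb hab
  have h := Real.log_le_sub_one_of_pos (div_pos hb ha)
  rw [Real.log_div hb.ne' ha.ne'] at h
  rw [sub_div, div_self ha.ne']
  linarith

/-- potential function for the greedy analysis. -/
noncomputable def stmt8_phi (opt θ p r : ℝ) : ℝ :=
  if r ≤ (p + 1) * opt then θ * r
  else θ * ((p + 1) * opt) + opt * Real.log ((r - p * opt) / opt)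

lemma stmt8_phi_step (opt wmax δ p r r' wb : ℝ)
    (hopt : 0 < opt) (hδ : 0 < δ) (hwmax : 0 < wmax) (hp : 0 ≤ p)
    (hgain : δ ≤ r - r') (hr' : 0 ≤ r') (hwb : wb ≤ wmax)
    (hkey : wb * (r - p * opt) ≤ opt * (r - r')) :
    wb ≤ stmt8_phi opt (wmax / δ) p r - stmt8_phi opt (wmax / δ) p r' := by
  set θ := wmax / δ with hθdef
  have hθ : 0 < θ := div_pos hwmax hδ
  have hθδ : θ * δ = wmax := div_mul_cancel₀ wmax hδ.ne'
  have hrr' : r' < r := by linarith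
  by_cases h1 : r ≤ (p + 1) * opt
  · have h2 : r' ≤ (p + 1) * opt := by linarith
    simp only [stmt8_phi, if_pos h1, if_pos h2]
    have h3 : θ * δ ≤ θ * (r - r') := mul_le_mul_of_nonneg_left hgain hθ.le
    nlinarith
  · push_neg at h1
    have hq : 0 ≤ (p + 1) * opt := by nlinarith
    have hapos : 0 < r - p * opt := by nlinarith
    have ha : opt < r - p * opt := by nlinarith
    have hwb' : wb * (r - p * opt) ≤ opt * (r - r') := hkey
    have hlogd : Real.log ((r - p * opt) / opt) = Real.log (r - p * opt) - Real.log opt :=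
      Real.log_div hapos.ne' hopt.ne'
    by_cases h2 : r' ≤ (p + 1) * opt
    · -- crossing step
      simp only [stmt8_phi, if_neg (not_le.mpr h1), if_pos h2]
      rw [hlogd]
      have hlog : (r - p * opt - opt) / (r - p * opt) ≤ Real.log (r - p * opt) - Real.log opt :=
        stmt8_log_ineq hopt ha.le
      have ha' : r' - p * opt ≤ opt := by linarith
      by_cases hθc : θ ≤ opt / (r - p * opt)
      · have hwbB : wb ≤ θ * (r - r') := by
          calc wb ≤ wmax := hwb
          _ = θ * δ := hθδ.symm
          _ ≤ θ * (r - r') := mul_le_mul_of_nonneg_left hgain hθ.le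
        have h3 : θ * (r - p * opt - opt) ≤ opt / (r - p * opt) * (r - p * opt - opt) :=
          mul_le_mul_of_nonneg_right hθc (by linarith)
        have h4 : opt / (r - p * opt) * (r - p * opt - opt)
            = opt * ((r - p * opt - opt) / (r - p * opt)) := by ring
        have h5 : opt * ((r - p * opt - opt) / (r - p * opt))
            ≤ opt * (Real.log (r - p * opt) - Real.log opt) :=
          mul_le_mul_of_nonneg_left hlog hopt.le
        nlinarith
      · push_neg at hθc
        have h6 : opt / (r - p * opt) * (opt - (r' - p * opt)) ≤ θ * (opt - (r' - p * opt)) :=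
          mul_le_mul_of_nonneg_right hθc.le (by linarith)
        have h7 : opt * (r - r') / (r - p * opt)
            = opt * ((r - p * opt - opt) / (r - p * opt))
              + opt / (r - p * opt) * (opt - (r' - p * opt)) := by
          field_simp
          ring
        have h5 : opt * ((r - p * opt - opt) / (r - p * opt))
            ≤ opt * (Real.log (r - p * opt) - Real.log opt) :=
          mul_le_mul_of_nonneg_left hlog hopt.le
        have hwb2 : wb ≤ opt * (r - r') / (r - p * opt) := by
          rw [le_div_iff₀ hapos]
          linarith
        nlinarith
    · push_neg at h2
      simp only [stmt8_phi, if_neg (not_le.mpr h1), if_neg (not_le.mpr h2)]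
      have ha'pos : 0 < r' - p * opt := by nlinarith
      have hlog : ((r - p * opt) - (r' - p * opt)) / (r - p * opt)
          ≤ Real.log (r - p * opt) - Real.log (r' - p * opt) :=
        stmt8_log_ineq ha'pos (by linarith)
      have hlogd' : Real.log ((r' - p * opt) / opt)
          = Real.log (r' - p * opt) - Real.log opt := Real.log_div ha'pos.ne' hopt.ne'
      have hwb2 : wb ≤ opt * (r - r') / (r - p * opt) := by
        rw [le_div_iff₀ hapos]
        linarith
      have h5 : opt * (((r - p * opt) - (r' - p * opt)) / (r - p * opt))
          ≤ opt * (Real.log (r - p * opt) - Real.log (r' - p * opt)) :=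
        mul_le_mul_of_nonneg_left hlog hopt.le
      rw [hlogd, hlogd']
      have heq : opt * (r - r') / (r - p * opt)
          = opt * (((r - p * opt) - (r' - p * opt)) / (r - p * opt)) := by ring
      linarith



/-- approximation ratio of the greedy algorithm for MinGC. -/
theorem stmt_8 {X : Type*} [Fintype X] [DecidableEq X]
    (w : X → ℝ) (hw1 : ∀ v, 1 ≤ w v)
    (wmax : ℝ) (hwmax : ∀ v, w v ≤ wmax)
    (g : Finset X → ℝ) (hnonneg : ∀ S, 0 ≤ g S) (hmono : Monotone g)
    (hempty : g ∅ = 0)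
    (δ : ℝ) (hδpos : 0 < δ)
    (hδ : ∀ (C : Finset X) (v : X), v ∉ C → g C < g (insert v C) →
      δ ≤ g (insert v C) - g C)
    -- condition (i)
    (hprog : ∀ C : Finset X, g C < g Finset.univ →
      ∃ v ∈ Finset.univ \ C, g C < g (insert v C))
    -- an optimal solution
    (Cstar : Finset X) (hfeas : g Cstar = g Finset.univ)
    (opt : ℝ) (hopt : opt = ∑ v ∈ Cstar, w v)
    (hoptmin : ∀ D : Finset X, g D = g Finset.univ → opt ≤ ∑ v ∈ D, w v)
    -- condition (ii)
    (p : ℝ) (hp : 0 ≤ p)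
    (hii : ∀ C : Finset X, ∃ (t : ℕ) (v : ℕ → X),
      Set.InjOn v (Set.Iio t) ∧
      (∀ i < t, v i ∈ Cstar \ C) ∧
      g (C ∪ (Finset.range t).image v) = g Finset.univ ∧
      (∀ t' < t, g (C ∪ (Finset.range t').image v) < g Finset.univ) ∧
      (∀ i < t, g (C ∪ (Finset.range (i + 1)).image v)
          - g (C ∪ (Finset.range i).image v) ≤ g (insert (v i) C) - g C + p))
    -- the greedy algorithm
    (step : Finset X → Finset X)
    (hstop : ∀ C : Finset X, g C = g Finset.univ → step C = C)
    (hgreedy : ∀ C : Finset X, g C < g Finset.univ →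
      ∃ b ∈ Finset.univ \ C, step C = insert b C ∧
        ∀ v ∈ Finset.univ \ C,
          (g (insert v C) - g C) / w v ≤ (g (insert b C) - g C) / w b)
    -- its (feasible) output
    (k : ℕ) (hk : g (step^[k] ∅) = g Finset.univ) :
    ∑ v ∈ step^[k] ∅, w v ≤
      ((p + 1) * wmax / δ +
        (if g Finset.univ - (p + 1) * opt ≤ 0 then 0
         else Real.log ((g Finset.univ - p * opt) / opt))) * opt := by
  have hwnn : ∀ v : X, (0:ℝ) ≤ w v := fun v => le_trans zero_le_one (hw1 v)
  have hoptnn : 0 ≤ opt := hopt ▸ Finset.sum_nonneg (fun v _ => hwnn v)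
  by_cases hgx : g Finset.univ ≤ 0
  · -- trivial case : g univ = 0
    have hg0 : g Finset.univ = 0 := le_antisymm hgx (hnonneg _)
    have hopt0 : opt = 0 := by
      have := hoptmin ∅ (by rw [hempty, hg0])
      simp at this
      linarith
    have hfix : ∀ n : ℕ, step^[n] (∅ : Finset X) = ∅ := by
      intro n
      induction n with
      | zero => rfl
      | succ n ih => rw [Function.iterate_succ_apply', ih, hstop ∅ (by rw [hempty, hg0])]
    rw [hfix k, hopt0]
    simp
  · push_neg at hgx
    -- opt > 0, wmax ≥ 1
    have hCne : Cstar.Nonempty := by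
      by_contra h
      rw [Finset.not_nonempty_iff_eq_empty] at h
      rw [h, hempty] at hfeas
      linarith
    obtain ⟨x0, hx0⟩ := hCne
    have hoptpos : 0 < opt := by
      have h1 : w x0 ≤ ∑ v ∈ Cstar, w v := Finset.single_le_sum (fun v _ => hwnn v) hx0
      have := hw1 x0
      rw [hopt]; linarith
    have hwmaxpos : 0 < wmax := lt_of_lt_of_le zero_lt_one (le_trans (hw1 x0) (hwmax x0))
    -- key per-step estimate
    have key : ∀ C : Finset X, g C < g Finset.univ →
        ∃ b, b ∉ C ∧ step C = insert b C ∧ δ ≤ g (insert b C) - g C ∧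
          w b * (g Finset.univ - g C - p * opt) ≤ opt * (g (insert b C) - g C) := by
      intro C hC
      obtain ⟨b, hbmem, hstepC, hmax⟩ := hgreedy C hC
      have hbC : b ∉ C := (Finset.mem_sdiff.mp hbmem).2
      have hwb : (0:ℝ) < w b := lt_of_lt_of_le zero_lt_one (hw1 b)
      obtain ⟨v0, hv0mem, hv0⟩ := hprog C hC
      have hwv0 : (0:ℝ) < w v0 := lt_of_lt_of_le zero_lt_one (hw1 v0)
      have hratio0 : 0 < (g (insert v0 C) - g C) / w v0 := div_pos (by linarith) hwv0
      have hratiob : 0 < (g (insert b C) - g C) / w b :=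
        lt_of_lt_of_le hratio0 (hmax v0 hv0mem)
      have hgainb : 0 < g (insert b C) - g C := by
        by_contra h
        push_neg at h
        have : (g (insert b C) - g C) / w b ≤ 0 := div_nonpos_of_nonpos_of_nonneg h hwb.le
        linarith
      have hδb : δ ≤ g (insert b C) - g C := hδ C b hbC (by linarith)
      obtain ⟨t, v, hinj, hmem, hcov, hmin, hbound⟩ := hii C
      set ρ := (g (insert b C) - g C) / w b with hρ
      have htele : ∑ i ∈ Finset.range t,
          (g (C ∪ (Finset.range (i + 1)).image v) - g (C ∪ (Finset.range i).image v))
          = g Finset.univ - g C := by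
        rw [Finset.sum_range_sub (fun i => g (C ∪ (Finset.range i).image v))]
        simp [hcov]
      have hW : ∑ i ∈ Finset.range t, w (v i) ≤ opt := by
        have himg : ∑ i ∈ Finset.range t, w (v i) = ∑ x ∈ (Finset.range t).image v, w x := by
          rw [Finset.sum_image]
          intro i hi j hj hij
          exact hinj (Finset.mem_range.mp hi) (Finset.mem_range.mp hj) hij
        rw [himg, hopt]
        apply Finset.sum_le_sum_of_subset_of_nonneg
        · intro y hy
          obtain ⟨i, hi, rfl⟩ := Finset.mem_image.mp hy
          exact (Finset.mem_sdiff.mp (hmem i (Finset.mem_range.mp hi))).1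
        · intro y _ _
          exact hwnn y
      have ht : (t : ℝ) ≤ ∑ i ∈ Finset.range t, w (v i) := by
        calc (t : ℝ) = ∑ _i ∈ Finset.range t, (1:ℝ) := by simp
        _ ≤ _ := Finset.sum_le_sum (fun i _ => hw1 (v i))
      have hsum : g Finset.univ - g C ≤ ρ * (∑ i ∈ Finset.range t, w (v i)) + p * t := by
        rw [← htele]
        calc ∑ i ∈ Finset.range t,
            (g (C ∪ (Finset.range (i + 1)).image v) - g (C ∪ (Finset.range i).image v))
            ≤ ∑ i ∈ Finset.range t, (ρ * w (v i) + p) := by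
              apply Finset.sum_le_sum
              intro i hi
              have hit := Finset.mem_range.mp hi
              have hvC : v i ∉ C := (Finset.mem_sdiff.mp (hmem i hit)).2
              have hineq := hbound i hit
              have hgr := hmax (v i) (Finset.mem_sdiff.mpr ⟨Finset.mem_univ _, hvC⟩)
              have hwvi : (0:ℝ) < w (v i) := lt_of_lt_of_le zero_lt_one (hw1 (v i))
              rw [div_le_iff₀ hwvi] at hgr
              linarith
        _ = ρ * (∑ i ∈ Finset.range t, w (v i)) + p * t := by
              rw [Finset.sum_add_distrib, ← Finset.mul_sum, Finset.sum_const,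
                Finset.card_range, nsmul_eq_mul]
              ring
      refine ⟨b, hbC, hstepC, hδb, ?_⟩
      have hpt : p * t ≤ p * ∑ i ∈ Finset.range t, w (v i) := mul_le_mul_of_nonneg_left ht hp
      have hpW : p * (∑ i ∈ Finset.range t, w (v i)) ≤ p * opt :=
        mul_le_mul_of_nonneg_left hW hp
      have hρW : ρ * (∑ i ∈ Finset.range t, w (v i)) ≤ ρ * opt :=
        mul_le_mul_of_nonneg_left hW hratiob.le
      have h1 : g Finset.univ - g C - p * opt ≤ ρ * opt := by linarith
      have h2 : w b * (g Finset.univ - g C - p * opt) ≤ w b * (ρ * opt) :=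
        mul_le_mul_of_nonneg_left h1 hwb.le
      have h3 : w b * (ρ * opt) = opt * (g (insert b C) - g C) := by
        rw [hρ]
        field_simp
      linarith
    -- main induction over greedy iterations
    have main : ∀ j : ℕ,
        ∑ v ∈ step^[j] (∅ : Finset X), w v
          + stmt8_phi opt (wmax / δ) p (g Finset.univ - g (step^[j] (∅ : Finset X)))
          ≤ stmt8_phi opt (wmax / δ) p (g Finset.univ) := by
      intro j
      induction j with
      | zero => simp [hempty]
      | succ j ih =>
        rw [Function.iterate_succ_apply']
        set C := step^[j] (∅ : Finset X) with hCdef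
        by_cases hC : g C = g Finset.univ
        · rw [hstop C hC]
          exact ih
        · have hClt : g C < g Finset.univ :=
            lt_of_le_of_ne (hmono (Finset.subset_univ C)) hC
          obtain ⟨b, hbC, hstepC, hδb, hkeyb⟩ := key C hClt
          rw [hstepC, Finset.sum_insert hbC]
          have hstep := stmt8_phi_step opt wmax δ p
            (g Finset.univ - g C) (g Finset.univ - g (insert b C)) (w b)
            hoptpos hδpos hwmaxpos hp
            (by linarith)
            (by have := hmono (Finset.subset_univ (insert b C)); linarith)
            (hwmax b)
            (by have : g Finset.univ - g C - (g Finset.univ - g (insert b C))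
                  = g (insert b C) - g C := by ring
                rw [this]
                exact hkeyb)
          linarith
    have hfin := main k
    rw [hk, sub_self] at hfin
    have hq : (0:ℝ) ≤ (p + 1) * opt := by nlinarith
    have hphi0 : stmt8_phi opt (wmax / δ) p 0 = 0 := by
      rw [stmt8_phi, if_pos hq]
      ring
    rw [hphi0, add_zero] at hfin
    have hθnn : 0 ≤ wmax / δ := le_of_lt (div_pos hwmaxpos hδpos)
    by_cases hcond : g Finset.univ - (p + 1) * opt ≤ 0
    · rw [if_pos hcond]
      have hle : g Finset.univ ≤ (p + 1) * opt := by linarith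
      rw [stmt8_phi, if_pos hle] at hfin
      have : wmax / δ * g Finset.univ ≤ wmax / δ * ((p + 1) * opt) :=
        mul_le_mul_of_nonneg_left hle hθnn
      have heq : ((p + 1) * wmax / δ + 0) * opt = wmax / δ * ((p + 1) * opt) := by ring
      linarith
    · rw [if_neg hcond]
      push_neg at hcond
      have hle : ¬ g Finset.univ ≤ (p + 1) * opt := by push_neg; linarith
      rw [stmt8_phi, if_neg hle] at hfin
      have heq : ((p + 1) * wmax / δ + Real.log ((g Finset.univ - p * opt) / opt)) * opt
          = wmax / δ * ((p + 1) * opt)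
            + opt * Real.log ((g Finset.univ - p * opt) / opt) := by ring
      linarith
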